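/- Let n ≥ 1 be an integer, let p be a prime, and let A, B be n×n matrices over 𝔽_p. Then |S(A,B;p)| ≤ #{(V,Z) : V, Z are n×n matrices over 𝔽_p with VZ − ZV + A = 0}, and this right-hand side equals S(A,0;p). -/

import Mathlib

open scoped BigOperators

/-- The additive character `e_p(x) = exp(2πi x̃ / p)` on `ℤ/pℤ`. -/
noncomputable def ep (p : ℕ) (x : ZMod p) : ℂ :=
  Complex.exp (2 * Real.pi * Complex.I * (x.val : ℂ) / p)

/-- The matrix exponential sum `S(A,B;p) = ∑_{UV = VU} e_p(tr(AU + BV))`, the sum being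
over all pairs `(U,V)` of commuting `n × n` matrices over `𝔽_p`. -/
noncomputable def Sexp (n p : ℕ) [NeZero p]
    (A B : Matrix (Fin n) (Fin n) (ZMod p)) : ℂ :=
  ∑ UV : Matrix (Fin n) (Fin n) (ZMod p) × Matrix (Fin n) (Fin n) (ZMod p),
    if UV.1 * UV.2 = UV.2 * UV.1
    then ep p (Matrix.trace (A * UV.1 + B * UV.2)) else 0

section Aux

variable {n p : ℕ} [NeZero p]

lemma ep_eq_stdAddChar (x : ZMod p) : ep p x = ZMod.stdAddChar x := by
  have h := ZMod.stdAddChar_coe (N := p) (x.val : ℤ)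
  rw [show (((x.val : ℤ) : ZMod p)) = x by push_cast; simp [ZMod.natCast_val]] at h
  rw [h, ep]
  push_cast
  ring_nf

lemma abs_ep (x : ZMod p) : ‖ep p x‖ = 1 := by
  have : ep p x = Complex.exp ((2 * Real.pi * (x.val : ℝ) / p : ℝ) * Complex.I) := by
    rw [ep]; push_cast; ring_nf
  rw [this, Complex.norm_exp_ofReal_mul_I]

/-- The additive monoid hom `U ↦ tr (W * U)`. -/
def traceMulHom (W : Matrix (Fin n) (Fin n) (ZMod p)) :
    Matrix (Fin n) (Fin n) (ZMod p) →+ ZMod p where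
  toFun U := (W * U).trace
  map_zero' := by simp
  map_add' U₁ U₂ := by
    show (W * (U₁ + U₂)).trace = (W * U₁).trace + (W * U₂).trace
    rw [mul_add, Matrix.trace_add]

/-- The additive character `U ↦ e_p(tr (W * U))` on matrices. -/
noncomputable def psi (W : Matrix (Fin n) (Fin n) (ZMod p)) :
    AddChar (Matrix (Fin n) (Fin n) (ZMod p)) ℂ :=
  (ZMod.stdAddChar).compAddMonoidHom (traceMulHom W)

lemma psi_apply (W U : Matrix (Fin n) (Fin n) (ZMod p)) :
    psi W U = ZMod.stdAddChar ((W * U).trace) := rfl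

lemma trace_mul_stdBasis (W : Matrix (Fin n) (Fin n) (ZMod p)) (i j : Fin n) :
    (W * Matrix.single i j (1 : ZMod p)).trace = W j i := by
  rw [Matrix.trace, Finset.sum_eq_single j]
  · simp [Matrix.diag]
  · intro a _ ha
    simpa [Matrix.diag] using Matrix.mul_single_apply_of_ne (c := (1 : ZMod p)) i j a a ha W
  · simp

lemma psi_eq_zero_iff (W : Matrix (Fin n) (Fin n) (ZMod p)) :
    psi W = 0 ↔ W = 0 := by
  constructor
  · intro h
    ext j i
    have h2 : psi W (Matrix.single i j (1 : ZMod p)) = 1 := by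
      rw [h]; rfl
    rw [psi_apply, trace_mul_stdBasis] at h2
    have : ZMod.stdAddChar (W j i) = ZMod.stdAddChar (0 : ZMod p) := by
      rw [h2, AddChar.map_zero_eq_one]
    simpa using ZMod.injective_stdAddChar this
  · rintro rfl
    ext U
    simp [psi_apply]

/-- Orthogonality: `∑_U e_p(tr(W U)) = q·[W = 0]`. -/
lemma sum_psi (W : Matrix (Fin n) (Fin n) (ZMod p)) :
    ∑ U : Matrix (Fin n) (Fin n) (ZMod p), ZMod.stdAddChar ((W * U).trace) =
      if W = 0 then (Fintype.card (Matrix (Fin n) (Fin n) (ZMod p)) : ℂ) else 0 := by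
  classical
  have h := AddChar.sum_eq_ite (psi W)
  simp only [psi_apply] at h
  rw [h]
  simp [psi_eq_zero_iff]

/-- The commutant of `V` as an additive subgroup of matrices. -/
def commutant (V : Matrix (Fin n) (Fin n) (ZMod p)) :
    AddSubgroup (Matrix (Fin n) (Fin n) (ZMod p)) where
  carrier := {U | U * V = V * U}
  zero_mem' := by simp
  add_mem' := by
    intro a b ha hb
    simp only [Set.mem_setOf_eq] at *
    rw [add_mul, mul_add, ha, hb]
  neg_mem' := by
    intro a ha
    simp only [Set.mem_setOf_eq] at *
    rw [neg_mul, mul_neg, ha]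

lemma mem_commutant {V U : Matrix (Fin n) (Fin n) (ZMod p)} :
    U ∈ commutant V ↔ U * V = V * U := Iff.rfl

set_option maxHeartbeats 1000000 in
/-- The inner sum over the commutant of `V` is a nonnegative integer. -/
lemma inner_sum_nat (ψ : AddChar (Matrix (Fin n) (Fin n) (ZMod p)) ℂ)
    (V : Matrix (Fin n) (Fin n) (ZMod p)) :
    ∃ m : ℕ, (∑ U : Matrix (Fin n) (Fin n) (ZMod p),
      if U * V = V * U then ψ U else 0) = (m : ℂ) := by
  classical
  have h1 : (∑ U : Matrix (Fin n) (Fin n) (ZMod p),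
      if U * V = V * U then ψ U else 0)
      = ∑ U ∈ Finset.univ.filter (fun U => U * V = V * U), ψ U := by
    rw [Finset.sum_filter]
  have h2 : (∑ U ∈ Finset.univ.filter (fun U => U * V = V * U), ψ U)
      = ∑ u : (commutant V), ψ u :=
    Finset.sum_subtype _ (fun x => by
      simp only [Finset.mem_filter, Finset.mem_univ, true_and]
      exact mem_commutant.symm) _
  set φ : AddChar (commutant V) ℂ :=
    ψ.compAddMonoidHom (AddSubgroup.subtype (commutant V)) with hφ
  have h3 : (∑ u : (commutant V), ψ (u : Matrix (Fin n) (Fin n) (ZMod p)))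
      = ∑ u : (commutant V), φ u := rfl
  refine ⟨if φ = 0 then Fintype.card (commutant V) else 0, ?_⟩
  rw [h1, h2, h3, AddChar.sum_eq_ite φ]
  split_ifs <;> simp

end Aux

/-- `|S(A,B;p)| ≤ #{(V,Z) : VZ - ZV + A = 0}`, and moreover this cardinality equals
`S(A,0;p)`. -/
theorem abs_Sexp_le_card_fibre (n : ℕ) (hn : 1 ≤ n) (p : ℕ) [Fact p.Prime]
    (A B : Matrix (Fin n) (Fin n) (ZMod p)) :
    ‖Sexp n p A B‖ ≤
      (Set.ncard {VZ : Matrix (Fin n) (Fin n) (ZMod p) × Matrix (Fin n) (Fin n) (ZMod p) |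
        VZ.1 * VZ.2 - VZ.2 * VZ.1 + A = 0} : ℝ) ∧
    Sexp n p A 0 =
      (Set.ncard {VZ : Matrix (Fin n) (Fin n) (ZMod p) × Matrix (Fin n) (Fin n) (ZMod p) |
        VZ.1 * VZ.2 - VZ.2 * VZ.1 + A = 0} : ℂ) := by
  classical
  set χ : AddChar (ZMod p) ℂ := ZMod.stdAddChar with hχ
  set q : ℕ := Fintype.card (Matrix (Fin n) (Fin n) (ZMod p)) with hq
  have hq0 : (q : ℂ) ≠ 0 := Nat.cast_ne_zero.2 Fintype.card_ne_zero
  set N : ℕ := Set.ncard {VZ : Matrix (Fin n) (Fin n) (ZMod p) ×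
    Matrix (Fin n) (Fin n) (ZMod p) | VZ.1 * VZ.2 - VZ.2 * VZ.1 + A = 0} with hN
  -- N as a sum of indicators
  have hNsum : (N : ℂ) = ∑ VZ : Matrix (Fin n) (Fin n) (ZMod p) ×
      Matrix (Fin n) (Fin n) (ZMod p),
      if VZ.1 * VZ.2 - VZ.2 * VZ.1 + A = 0 then (1 : ℂ) else 0 := by
    rw [hN, Set.ncard_eq_toFinset_card', Set.toFinset_setOf, Finset.card_filter]
    push_cast
    simp
  -- S(A,0) written as a double sum
  have hS0 : Sexp n p A 0 = ∑ U : Matrix (Fin n) (Fin n) (ZMod p),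
      ∑ V : Matrix (Fin n) (Fin n) (ZMod p),
      if U * V = V * U then χ ((A * U).trace) else 0 := by
    rw [Sexp, Fintype.sum_prod_type]
    refine Finset.sum_congr rfl fun U _ => Finset.sum_congr rfl fun V _ => ?_
    simp [ep_eq_stdAddChar, hχ]
  -- key identity : q * N = q * S(A,0)
  have key : Sexp n p A 0 = (N : ℂ) := by
    have expand : (q : ℂ) * (N : ℂ) = ∑ VZ : Matrix (Fin n) (Fin n) (ZMod p) ×
        Matrix (Fin n) (Fin n) (ZMod p), ∑ U : Matrix (Fin n) (Fin n) (ZMod p),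
        χ (((VZ.1 * VZ.2 - VZ.2 * VZ.1 + A) * U).trace) := by
      rw [hNsum, Finset.mul_sum]
      refine Finset.sum_congr rfl fun VZ _ => ?_
      rw [sum_psi (VZ.1 * VZ.2 - VZ.2 * VZ.1 + A)]
      split_ifs <;> simp [hq]
    have expand2 : ∀ (V Z U : Matrix (Fin n) (Fin n) (ZMod p)),
        χ (((V * Z - Z * V + A) * U).trace) =
          χ ((A * U).trace) * χ (((U * V - V * U) * Z).trace) := by
      intro V Z U
      rw [← AddChar.map_add_eq_mul]
      congr 1
      have h1 : ((V * Z - Z * V + A) * U).trace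
          = ((V * Z) * U).trace - ((Z * V) * U).trace + (A * U).trace := by
        simp only [add_mul, sub_mul, Matrix.trace_add, Matrix.trace_sub]
      have h2 : ((U * V - V * U) * Z).trace
          = ((U * V) * Z).trace - ((V * U) * Z).trace := by
        simp only [sub_mul, Matrix.trace_sub]
      rw [h1, h2]
      have e1 : ((V * Z) * U).trace = ((U * V) * Z).trace := by
        rw [Matrix.trace_mul_comm, Matrix.mul_assoc]
      have e2 : ((Z * V) * U).trace = ((V * U) * Z).trace := by
        rw [Matrix.mul_assoc, Matrix.trace_mul_comm]
      rw [e1, e2]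
      ring
    have expand3 : (q : ℂ) * (N : ℂ) = (q : ℂ) * Sexp n p A 0 := by
      rw [expand]
      have swap1 : ∀ VZ : Matrix (Fin n) (Fin n) (ZMod p) ×
          Matrix (Fin n) (Fin n) (ZMod p),
          (∑ U : Matrix (Fin n) (Fin n) (ZMod p),
            χ (((VZ.1 * VZ.2 - VZ.2 * VZ.1 + A) * U).trace))
          = ∑ U : Matrix (Fin n) (Fin n) (ZMod p),
            χ ((A * U).trace) * χ (((U * VZ.1 - VZ.1 * U) * VZ.2).trace) := by
        intro VZ
        exact Finset.sum_congr rfl fun U _ => expand2 VZ.1 VZ.2 U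
      simp_rw [swap1]
      rw [Finset.sum_comm]
      rw [hS0, Finset.mul_sum]
      refine Finset.sum_congr rfl fun U _ => ?_
      rw [Fintype.sum_prod_type, Finset.mul_sum]
      refine Finset.sum_congr rfl fun V _ => ?_
      rw [← Finset.mul_sum, sum_psi (U * V - V * U)]
      by_cases h : U * V = V * U
      · rw [if_pos (by rw [h, sub_self]), if_pos h]
        ring
      · rw [if_neg (fun hc => h (sub_eq_zero.mp hc)), if_neg h]
        ring
    exact (mul_left_cancel₀ hq0 expand3).symm
  -- inner sums are natural numbers
  obtain ⟨m, hm⟩ := Classical.axiomOfChoice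
    (fun V : Matrix (Fin n) (Fin n) (ZMod p) => inner_sum_nat (psi A) V)
  simp only [psi_apply] at hm
  -- S(A,0) = ∑ m V
  have hS0' : Sexp n p A 0 = ((∑ V : Matrix (Fin n) (Fin n) (ZMod p), m V : ℕ) : ℂ) := by
    rw [hS0, Finset.sum_comm]
    push_cast
    exact Finset.sum_congr rfl fun V _ => hm V
  have hNm : N = ∑ V : Matrix (Fin n) (Fin n) (ZMod p), m V := by
    have : ((N : ℕ) : ℂ) = ((∑ V : Matrix (Fin n) (Fin n) (ZMod p), m V : ℕ) : ℂ) := by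
      rw [← key, hS0']
    exact_mod_cast this
  refine ⟨?_, key⟩
  -- the bound
  have hSB : Sexp n p A B = ∑ V : Matrix (Fin n) (Fin n) (ZMod p),
      χ ((B * V).trace) * ((m V : ℕ) : ℂ) := by
    rw [Sexp, Fintype.sum_prod_type, Finset.sum_comm]
    refine Finset.sum_congr rfl fun V _ => ?_
    rw [← hm V, Finset.mul_sum]
    refine Finset.sum_congr rfl fun U _ => ?_
    by_cases h : U * V = V * U
    · rw [if_pos h, if_pos h, ep_eq_stdAddChar, Matrix.trace_add,
        AddChar.map_add_eq_mul]
      ring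
    · rw [if_neg h, if_neg h, mul_zero]
  rw [hSB]
  calc ‖∑ V : Matrix (Fin n) (Fin n) (ZMod p),
        χ ((B * V).trace) * ((m V : ℕ) : ℂ)‖
      ≤ ∑ V : Matrix (Fin n) (Fin n) (ZMod p),
        ‖χ ((B * V).trace) * ((m V : ℕ) : ℂ)‖ :=
        norm_sum_le _ _
    _ = ∑ V : Matrix (Fin n) (Fin n) (ZMod p), (m V : ℝ) := by
        refine Finset.sum_congr rfl fun V _ => ?_
        rw [norm_mul, ← ep_eq_stdAddChar, abs_ep, one_mul, Complex.norm_natCast]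
    _ = (N : ℝ) := by rw [hNm]; push_cast; ring
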